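/- For commuting positive definite matrices Σ₁, Σ₂ (simultaneously diagonalizable), and λ_M ≠ λ_m the extreme eigenvalues of Σ₂Σ₁⁻¹, the point X = Σ₁ *_{1/2} Σ₂ satisfies d_∞(Σ₁, X) = d_∞(X, Σ₂) = (1/2) d_∞(Σ₁, Σ₂), where d_∞ is the Thompson metric. -/

import Mathlib

/-- The largest element of the real spectrum of a matrix. -/
noncomputable def lambdaMax {d : ℕ} (A : Matrix (Fin d) (Fin d) ℝ) : ℝ :=
  sSup (spectrum ℝ A)

/-- The Thompson distance on positive definite matrices. -/
noncomputable def thompsonDist {d : ℕ} (A B : Matrix (Fin d) (Fin d) ℝ) : ℝ :=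
  Real.log (max (lambdaMax (A * B⁻¹)) (lambdaMax (B * A⁻¹)))

/-- Coefficient of `Σ₂` in the Nussbaum geodesic. -/
noncomputable def nussA (lM lm t : ℝ) : ℝ :=
  (Real.rpow lM t - Real.rpow lm t) / (lM - lm)

/-- Coefficient of `Σ₁` in the Nussbaum geodesic. -/
noncomputable def nussB (lM lm t : ℝ) : ℝ :=
  (lM * Real.rpow lm t - lm * Real.rpow lM t) / (lM - lm)

/-- The Nussbaum geodesic `S₁ *_t S₂` of the Thompson metric. -/
noncomputable def nussGeodesic {d : ℕ} (S₁ S₂ : Matrix (Fin d) (Fin d) ℝ) (t : ℝ) :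
    Matrix (Fin d) (Fin d) ℝ :=
  nussA (sSup (spectrum ℝ (S₂ * S₁⁻¹))) (sInf (spectrum ℝ (S₂ * S₁⁻¹))) t • S₂ +
    nussB (sSup (spectrum ℝ (S₂ * S₁⁻¹))) (sInf (spectrum ℝ (S₂ * S₁⁻¹))) t • S₁

lemma exists_eigvec {d : ℕ} {A : Matrix (Fin d) (Fin d) ℝ} {μ : ℝ} (h : μ ∈ spectrum ℝ A) :
    ∃ v : Fin d → ℝ, v ≠ 0 ∧ A.mulVec v = μ • v := by
  rw [← AlgEquiv.spectrum_eq (Matrix.toLinAlgEquiv' (R := ℝ) (n := Fin d)),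
    ← Module.End.hasEigenvalue_iff_mem_spectrum] at h
  obtain ⟨v, hv⟩ := h.exists_hasEigenvector
  exact ⟨v, hv.2, hv.apply_eq_smul⟩

lemma spectrum_smul_add_smul_one {d : ℕ} (A : Matrix (Fin d) (Fin d) ℝ) {a : ℝ} (ha : a ≠ 0)
    (b : ℝ) :
    spectrum ℝ (a • A + b • (1 : Matrix (Fin d) (Fin d) ℝ)) =
      (fun x => a * x + b) '' spectrum ℝ A := by
  have h1 : b • (1 : Matrix (Fin d) (Fin d) ℝ) = algebraMap ℝ _ b :=
    (Algebra.algebraMap_eq_smul_one b).symm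
  have h2 : a • A = (Units.mk0 a ha) • A := rfl
  rw [add_comm, h1, ← spectrum.singleton_add_eq, h2,
    spectrum.unit_smul_eq_smul A (Units.mk0 a ha)]
  ext x
  simp only [Set.mem_add, Set.mem_smul_set, Set.mem_singleton_iff, Set.mem_image]
  constructor
  · rintro ⟨y, rfl, z, ⟨t, ht, rfl⟩, rfl⟩
    exact ⟨t, ht, by simp [Units.smul_def, smul_eq_mul]; ring⟩
  · rintro ⟨t, ht, rfl⟩
    exact ⟨b, rfl, _, ⟨t, ht, rfl⟩, by simp [Units.smul_def, smul_eq_mul]; ring⟩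

lemma spectrum_matrix_inv {d : ℕ} {A : Matrix (Fin d) (Fin d) ℝ} (hA : IsUnit A) :
    spectrum ℝ A⁻¹ = (spectrum ℝ A)⁻¹ := by
  have h := spectrum.map_inv (𝕜 := ℝ) hA.unit
  rw [hA.unit_spec, Matrix.coe_units_inv, hA.unit_spec] at h
  exact h.symm

lemma isGreatest_affine {S : Set ℝ} {M a b : ℝ} (hM : IsGreatest S M) (ha : 0 ≤ a) :
    IsGreatest ((fun x => a * x + b) '' S) (a * M + b) := by
  refine ⟨⟨M, hM.1, rfl⟩, ?_⟩
  rintro x ⟨t, ht, rfl⟩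
  have := hM.2 ht
  dsimp only
  nlinarith

lemma isLeast_affine {S : Set ℝ} {m a b : ℝ} (hm : IsLeast S m) (ha : 0 ≤ a) :
    IsLeast ((fun x => a * x + b) '' S) (a * m + b) := by
  refine ⟨⟨m, hm.1, rfl⟩, ?_⟩
  rintro x ⟨t, ht, rfl⟩
  have := hm.2 ht
  dsimp only
  nlinarith

lemma isGreatest_inv {S : Set ℝ} {m : ℝ} (hm : IsLeast S m) (hpos : 0 < m) :
    IsGreatest S⁻¹ m⁻¹ := by
  constructor
  · rw [Set.mem_inv, inv_inv]; exact hm.1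
  · intro x hx
    rw [Set.mem_inv] at hx
    have h1 : m ≤ x⁻¹ := hm.2 hx
    have h2 : 0 < x⁻¹ := lt_of_lt_of_le hpos h1
    calc x = (x⁻¹)⁻¹ := (inv_inv x).symm
      _ ≤ m⁻¹ := by exact inv_anti₀ hpos h1

lemma isLeast_inv {S : Set ℝ} {M : ℝ} (hM : IsGreatest S M) (hpos : ∀ x ∈ S, 0 < x) :
    IsLeast S⁻¹ M⁻¹ := by
  constructor
  · rw [Set.mem_inv, inv_inv]; exact hM.1
  · intro x hx
    rw [Set.mem_inv] at hx
    have h1 : x⁻¹ ≤ M := hM.2 hx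
    have h2 : 0 < x⁻¹ := hpos _ hx
    calc M⁻¹ ≤ (x⁻¹)⁻¹ := inv_anti₀ h2 h1
      _ = x := inv_inv x

theorem nussbaum_midpoint_thompson {d : ℕ} (S₁ S₂ : Matrix (Fin d) (Fin d) ℝ)
    (h₁ : S₁.PosDef) (h₂ : S₂.PosDef) (hcomm : S₁ * S₂ = S₂ * S₁)
    (hne : sSup (spectrum ℝ (S₂ * S₁⁻¹)) ≠ sInf (spectrum ℝ (S₂ * S₁⁻¹))) :
    thompsonDist S₁ (nussGeodesic S₁ S₂ (1 / 2)) =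
        (1 / 2) * thompsonDist S₁ S₂ ∧
      thompsonDist (nussGeodesic S₁ S₂ (1 / 2)) S₂ =
        (1 / 2) * thompsonDist S₁ S₂ := by
  classical
  set M := S₂ * S₁⁻¹ with hM
  set lM := sSup (spectrum ℝ M) with hlM
  set lm := sInf (spectrum ℝ M) with hlm
  have hdet1 : IsUnit S₁.det := isUnit_iff_ne_zero.mpr h₁.det_pos.ne'
  have hdet2 : IsUnit S₂.det := isUnit_iff_ne_zero.mpr h₂.det_pos.ne'
  have hS11 : S₁ * S₁⁻¹ = 1 := Matrix.mul_nonsing_inv _ hdet1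
  have hS11' : S₁⁻¹ * S₁ = 1 := Matrix.nonsing_inv_mul _ hdet1
  have hS22 : S₂ * S₂⁻¹ = 1 := Matrix.mul_nonsing_inv _ hdet2
  -- positivity of the spectrum of M
  have hpos : ∀ μ ∈ spectrum ℝ M, 0 < μ := by
    intro μ hμ
    obtain ⟨v, hv0, hv⟩ := exists_eigvec hμ
    set w := S₁⁻¹.mulVec v with hw
    have hvw : S₁.mulVec w = v := by
      rw [hw, Matrix.mulVec_mulVec, hS11, Matrix.one_mulVec]
    have hw0 : w ≠ 0 := by
      intro h0
      exact hv0 (by rw [← hvw, h0, Matrix.mulVec_zero])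
    have h2w : S₂.mulVec w = μ • S₁.mulVec w := by
      rw [hvw, hw, Matrix.mulVec_mulVec, ← hM, hv]
    have q1 : 0 < dotProduct w (S₂.mulVec w) := by simpa using h₂.dotProduct_mulVec_pos hw0
    have q2 : 0 < dotProduct w (S₁.mulVec w) := by simpa using h₁.dotProduct_mulVec_pos hw0
    have q3 : dotProduct w (S₂.mulVec w) = μ * dotProduct w (S₁.mulVec w) := by
      rw [h2w, dotProduct_smul, smul_eq_mul]
    rw [q3] at q1
    nlinarith
  have hfin : (spectrum ℝ M).Finite := Matrix.finite_spectrum M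
  have hnonempty : (spectrum ℝ M).Nonempty := by
    by_contra h
    rw [Set.not_nonempty_iff_eq_empty] at h
    apply hne
    rw [hlM, hlm, h, Real.sSup_empty, Real.sInf_empty]
  have hGM : IsGreatest (spectrum ℝ M) lM :=
    ⟨hnonempty.csSup_mem hfin, fun x hx => le_csSup hfin.bddAbove hx⟩
  have hLm : IsLeast (spectrum ℝ M) lm :=
    ⟨hnonempty.csInf_mem hfin, fun x hx => csInf_le hfin.bddBelow hx⟩
  have hlm0 : 0 < lm := hpos _ hLm.1
  have hlmM : lm < lM := lt_of_le_of_ne (hLm.2 hGM.1) (Ne.symm hne)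
  have hlM0 : 0 < lM := hlm0.trans hlmM
  -- square roots
  set x := Real.sqrt lM with hxdef
  set y := Real.sqrt lm with hydef
  have hy0 : 0 < y := Real.sqrt_pos.mpr hlm0
  have hx0 : 0 < x := Real.sqrt_pos.mpr hlM0
  have hyx : y < x := Real.sqrt_lt_sqrt hlm0.le hlmM
  have hx2 : x * x = lM := Real.mul_self_sqrt hlM0.le
  have hy2 : y * y = lm := Real.mul_self_sqrt hlm0.le
  set a := nussA lM lm (1/2) with ha
  set b := nussB lM lm (1/2) with hb
  have hxy2 : x * x - y * y ≠ 0 := by nlinarith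
  have hrx : Real.rpow lM (1/2) = x := by rw [hxdef, Real.sqrt_eq_rpow]; rfl
  have hry : Real.rpow lm (1/2) = y := by rw [hydef, Real.sqrt_eq_rpow]; rfl
  have e1 : a * lM + b = x := by
    rw [ha, hb, nussA, nussB, hrx, hry, ← hx2, ← hy2]
    field_simp [show x ^ 2 - y ^ 2 ≠ 0 by nlinarith]
    ring
  have e2 : a * lm + b = y := by
    rw [ha, hb, nussA, nussB, hrx, hry, ← hx2, ← hy2]
    field_simp [show x ^ 2 - y ^ 2 ≠ 0 by nlinarith]
    ring
  have ha0 : 0 < a := by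
    rw [ha, nussA, hrx, hry]
    apply div_pos (by linarith) (by linarith)
  have hb0 : 0 < b := by
    rw [hb, nussB, hrx, hry]
    apply div_pos _ (by linarith)
    nlinarith [mul_pos (mul_pos hx0 hy0) (sub_pos.mpr hyx), hx2, hy2]
  -- the midpoint
  set X := nussGeodesic S₁ S₂ (1/2) with hX
  have hXab : X = a • S₂ + b • S₁ := rfl
  set N := a • M + b • (1 : Matrix (Fin d) (Fin d) ℝ) with hN
  have hNS1 : N * S₁ = X := by
    rw [hN, hXab, add_mul, smul_mul_assoc, smul_mul_assoc, one_mul, hM, mul_assoc, hS11',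
      mul_one]
  have hspecN : spectrum ℝ N = (fun t => a * t + b) '' spectrum ℝ M :=
    spectrum_smul_add_smul_one M ha0.ne' b
  have hNG : IsGreatest (spectrum ℝ N) x := by
    rw [hspecN, ← e1]; exact isGreatest_affine hGM ha0.le
  have hNL : IsLeast (spectrum ℝ N) y := by
    rw [hspecN, ← e2]; exact isLeast_affine hLm ha0.le
  have hNpos : ∀ t ∈ spectrum ℝ N, 0 < t := fun t ht => lt_of_lt_of_le hy0 (hNL.2 ht)
  have hNunit : IsUnit N := by
    rw [← spectrum.zero_notMem_iff ℝ]
    intro h0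
    exact absurd (hNpos 0 h0) (lt_irrefl 0)
  have hNinvG : IsGreatest (spectrum ℝ N⁻¹) y⁻¹ := by
    rw [spectrum_matrix_inv hNunit]; exact isGreatest_inv hNL hy0
  have k1 : X * S₁⁻¹ = N := by rw [← hNS1, mul_assoc, hS11, mul_one]
  have k2 : S₁ * X⁻¹ = N⁻¹ := by
    rw [← hNS1, Matrix.mul_inv_rev, ← mul_assoc, hS11, one_mul]
  have d1 : thompsonDist S₁ X = Real.log (max y⁻¹ x) := by
    rw [thompsonDist, k1, k2, lambdaMax, lambdaMax, hNinvG.csSup_eq, hNG.csSup_eq]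
  -- second leg
  have hMunit : IsUnit M := by
    rw [← spectrum.zero_notMem_iff ℝ]
    intro h0
    exact absurd (hpos 0 h0) (lt_irrefl 0)
  have hMinv : M⁻¹ = S₁ * S₂⁻¹ := by
    rw [hM, Matrix.mul_inv_rev, Matrix.nonsing_inv_nonsing_inv _ hdet1]
  have hspecMinv : spectrum ℝ M⁻¹ = (spectrum ℝ M)⁻¹ := spectrum_matrix_inv hMunit
  have hMinvG : IsGreatest (spectrum ℝ M⁻¹) lm⁻¹ := by
    rw [hspecMinv]; exact isGreatest_inv hLm hlm0
  have hMinvL : IsLeast (spectrum ℝ M⁻¹) lM⁻¹ := by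
    rw [hspecMinv]; exact isLeast_inv hGM hpos
  have hMinvpos : ∀ t ∈ spectrum ℝ M⁻¹, 0 < t :=
    fun t ht => lt_of_lt_of_le (by positivity) (hMinvL.2 ht)
  set P := b • M⁻¹ + a • (1 : Matrix (Fin d) (Fin d) ℝ) with hP
  have hPS2 : P * S₂ = X := by
    rw [hP, hXab, add_mul, smul_mul_assoc, smul_mul_assoc, one_mul, hMinv, mul_assoc,
      Matrix.nonsing_inv_mul _ hdet2, mul_one, add_comm]
  have e3 : b * lm⁻¹ + a = y⁻¹ := by
    rw [ha, hb, nussA, nussB, hrx, hry, ← hx2, ← hy2]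
    field_simp [show x ^ 2 - y ^ 2 ≠ 0 by nlinarith]
    ring
  have e4 : b * lM⁻¹ + a = x⁻¹ := by
    rw [ha, hb, nussA, nussB, hrx, hry, ← hx2, ← hy2]
    field_simp [show x ^ 2 - y ^ 2 ≠ 0 by nlinarith]
    ring
  have hspecP : spectrum ℝ P = (fun t => b * t + a) '' spectrum ℝ M⁻¹ :=
    spectrum_smul_add_smul_one M⁻¹ hb0.ne' a
  have hPG : IsGreatest (spectrum ℝ P) y⁻¹ := by
    rw [hspecP, ← e3]; exact isGreatest_affine hMinvG hb0.le
  have hPL : IsLeast (spectrum ℝ P) x⁻¹ := by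
    rw [hspecP, ← e4]; exact isLeast_affine hMinvL hb0.le
  have hPpos : ∀ t ∈ spectrum ℝ P, 0 < t :=
    fun t ht => lt_of_lt_of_le (by positivity) (hPL.2 ht)
  have hPunit : IsUnit P := by
    rw [← spectrum.zero_notMem_iff ℝ]
    intro h0
    exact absurd (hPpos 0 h0) (lt_irrefl 0)
  have hPinvG : IsGreatest (spectrum ℝ P⁻¹) x := by
    rw [spectrum_matrix_inv hPunit, ← inv_inv x]
    exact isGreatest_inv hPL (by positivity)
  have k3 : X * S₂⁻¹ = P := by rw [← hPS2, mul_assoc, hS22, mul_one]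
  have k4 : S₂ * X⁻¹ = P⁻¹ := by
    rw [← hPS2, Matrix.mul_inv_rev, ← mul_assoc, hS22, one_mul]
  have d2 : thompsonDist X S₂ = Real.log (max y⁻¹ x) := by
    rw [thompsonDist, k3, k4, lambdaMax, lambdaMax, hPG.csSup_eq, hPinvG.csSup_eq]
  -- the full distance
  have dS : thompsonDist S₁ S₂ = Real.log (max lm⁻¹ lM) := by
    rw [thompsonDist, ← hMinv, ← hM, lambdaMax, lambdaMax, hMinvG.csSup_eq, ← hlM]
  -- final computation
  have hmaxnn : (0:ℝ) ≤ max lm⁻¹ lM := le_max_of_le_right hlM0.le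
  have hkey : Real.log (max y⁻¹ x) = 1 / 2 * Real.log (max lm⁻¹ lM) := by
    have hsm : Monotone Real.sqrt := fun u v h => Real.sqrt_le_sqrt h
    have h1 : max y⁻¹ x = Real.sqrt (max lm⁻¹ lM) := by
      rw [hsm.map_max, Real.sqrt_inv, ← hydef, ← hxdef]
    rw [h1, Real.log_sqrt hmaxnn]
    ring
  exact ⟨by rw [d1, dS, hkey], by rw [d2, dS, hkey]⟩
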